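/- Let H be a probability measure on [0,1]² with cumulative distribution function H(x, y) = H([0,x] × [0,y]), and let a : [0,1] → [0,1] be a continuous strictly increasing bijection with inverse a⁻. Then ∫_{[0,1]²} (1/2)·|a(u1) − a⁻(u2)| dH(u1, u2) = (1/2)·( ∫₀¹ H(a⁻(u), 1) du + ∫₀¹ H(1, a(u)) du ) − ∫₀¹ H(a⁻(u), a(u)) du. -/

import Mathlib

open MeasureTheory

/-- The bivariate cumulative distribution function `H(x, y) = H([0,x] × [0,y])`
of a measure on the unit square. -/
noncomputable def cdf2 (μ : Measure (ℝ × ℝ)) (x y : ℝ) : ℝ :=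
  (μ (Set.Icc 0 x ×ˢ Set.Icc 0 y)).toReal

lemma aux_ico_int (s t : ℝ) (hs : 0 ≤ s) (hst : s ≤ t) (ht : t ≤ 1) :
    ∫ u in (0:ℝ)..1, |(if s ≤ u then (1:ℝ) else 0) - (if t ≤ u then 1 else 0)| = t - s := by
  have hpt : ∀ u : ℝ, |(if s ≤ u then (1:ℝ) else 0) - (if t ≤ u then 1 else 0)|
      = (Set.Ico s t).indicator (fun _ => (1:ℝ)) u := by
    intro u
    rcases le_or_gt t u with h2 | h2
    · have h1 : s ≤ u := hst.trans h2
      simp [h1, h2, Set.indicator_apply, Set.mem_Ico, not_lt.mpr h2]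
    · rcases le_or_gt s u with h1 | h1
      · simp [h1, not_le.mpr h2, Set.indicator_apply, Set.mem_Ico, h2]
      · simp [not_le.mpr h1, not_le.mpr (h1.trans_le hst), Set.indicator_apply, Set.mem_Ico]
  simp only [hpt]
  rw [intervalIntegral.integral_of_le zero_le_one,
    MeasureTheory.integral_indicator_const (1:ℝ) measurableSet_Ico,
    measureReal_def, Measure.restrict_apply measurableSet_Ico]
  have hnull : volume (Set.Ico s t \ Set.Ioc 0 1) = 0 := by
    refine measure_mono_null ?_ (Real.volume_singleton (a := 0))
    rintro x ⟨⟨hx1, hx2⟩, hx3⟩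
    simp only [Set.mem_Ioc, not_and_or, not_lt, not_le] at hx3
    have hx0 : 0 ≤ x := hs.trans hx1
    have hx1' : x ≤ 1 := (hx2.trans_le ht).le
    rcases hx3 with h | h
    · exact Set.mem_singleton_iff.mpr (le_antisymm h hx0)
    · exfalso; linarith
  have key : volume (Set.Ico s t ∩ Set.Ioc 0 1) = volume (Set.Ico s t) := by
    refine le_antisymm (measure_mono Set.inter_subset_left) ?_
    calc volume (Set.Ico s t) ≤ volume (Set.Ico s t ∩ Set.Ioc 0 1) + volume (Set.Ico s t \ Set.Ioc 0 1) :=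
          measure_le_inter_add_diff _ _ _
      _ = volume (Set.Ico s t ∩ Set.Ioc 0 1) := by rw [hnull, add_zero]
  rw [key, Real.volume_Ico, smul_eq_mul, mul_one, ENNReal.toReal_ofReal (by linarith)]

lemma aux_ptwise (s t : ℝ) (hs : s ∈ Set.Icc (0:ℝ) 1) (ht : t ∈ Set.Icc (0:ℝ) 1) :
    ∫ u in (0:ℝ)..1, (1/2) * |(if s ≤ u then (1:ℝ) else 0) - (if t ≤ u then 1 else 0)|
      = (1/2) * |s - t| := by
  rw [intervalIntegral.integral_const_mul]
  rcases le_total s t with h | h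
  · rw [aux_ico_int s t hs.1 h ht.2, abs_of_nonpos (by linarith)]; ring
  · have hflip : ∀ u : ℝ, |(if s ≤ u then (1:ℝ) else 0) - (if t ≤ u then 1 else 0)|
        = |(if t ≤ u then (1:ℝ) else 0) - (if s ≤ u then 1 else 0)| := fun u => abs_sub_comm _ _
    simp only [hflip]
    rw [aux_ico_int t s ht.1 h hs.2, abs_of_nonneg (by linarith)]

lemma aux_peru (μ : Measure (ℝ × ℝ)) [IsProbabilityMeasure μ]
    (hsupp : ∀ᵐ p ∂μ, p ∈ Set.Icc (0:ℝ) 1 ×ˢ Set.Icc (0:ℝ) 1)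
    (x y : ℝ) (hx : x ∈ Set.Icc (0:ℝ) 1) (hy : y ∈ Set.Icc (0:ℝ) 1) :
    ∫ p : ℝ × ℝ, (1/2) * |(if p.1 ≤ x then (1:ℝ) else 0) - (if p.2 ≤ y then 1 else 0)| ∂μ
      = (1/2) * (cdf2 μ x 1 + cdf2 μ 1 y) - cdf2 μ x y := by
  set A : Set (ℝ × ℝ) := Set.Icc 0 x ×ˢ Set.Icc 0 1 with hA
  set B : Set (ℝ × ℝ) := Set.Icc 0 1 ×ˢ Set.Icc 0 y with hB
  have hAm : MeasurableSet A := measurableSet_Icc.prod measurableSet_Icc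
  have hBm : MeasurableSet B := measurableSet_Icc.prod measurableSet_Icc
  have hcongr : ∀ᵐ p ∂μ, (1/2) * |(if p.1 ≤ x then (1:ℝ) else 0) - (if p.2 ≤ y then 1 else 0)|
      = (1/2) * A.indicator (fun _ => (1:ℝ)) p + (1/2) * B.indicator (fun _ => (1:ℝ)) p
        - (A ∩ B).indicator (fun _ => (1:ℝ)) p := by
    filter_upwards [hsupp] with p hp
    have hmemA : p ∈ A ↔ p.1 ≤ x := by
      rw [hA, Set.mem_prod]
      simp only [Set.mem_Icc]
      exact ⟨fun h => h.1.2, fun h => ⟨⟨hp.1.1, h⟩, hp.2.1, hp.2.2⟩⟩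
    have hmemB : p ∈ B ↔ p.2 ≤ y := by
      rw [hB, Set.mem_prod]
      simp only [Set.mem_Icc]
      exact ⟨fun h => h.2.2, fun h => ⟨⟨hp.1.1, hp.1.2⟩, hp.2.1, h⟩⟩
    by_cases h1 : p.1 ≤ x <;> by_cases h2 : p.2 ≤ y <;>
      simp only [Set.indicator_apply, Set.mem_inter_iff, hmemA, hmemB, h1, h2, if_true, if_false,
        and_self, and_false, false_and, if_neg, not_false_iff] <;> norm_num
  rw [integral_congr_ae hcongr]
  have iA : Integrable (fun p : ℝ × ℝ => A.indicator (fun _ => (1:ℝ)) p) μ :=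
    (integrable_const 1).indicator hAm
  have iB : Integrable (fun p : ℝ × ℝ => B.indicator (fun _ => (1:ℝ)) p) μ :=
    (integrable_const 1).indicator hBm
  have iAB : Integrable (fun p : ℝ × ℝ => (A ∩ B).indicator (fun _ => (1:ℝ)) p) μ :=
    (integrable_const 1).indicator (hAm.inter hBm)
  have iA2 : Integrable (fun p : ℝ × ℝ => (1/2) * A.indicator (fun _ => (1:ℝ)) p) μ :=
    iA.const_mul _
  have iB2 : Integrable (fun p : ℝ × ℝ => (1/2) * B.indicator (fun _ => (1:ℝ)) p) μ :=
    iB.const_mul _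
  have i12 : Integrable (fun p : ℝ × ℝ =>
      (1/2) * A.indicator (fun _ => (1:ℝ)) p + (1/2) * B.indicator (fun _ => (1:ℝ)) p) μ :=
    iA2.add iB2
  rw [integral_sub i12 iAB, integral_add iA2 iB2, integral_const_mul, integral_const_mul,
    MeasureTheory.integral_indicator_const (1:ℝ) hAm,
    MeasureTheory.integral_indicator_const (1:ℝ) hBm,
    MeasureTheory.integral_indicator_const (1:ℝ) (hAm.inter hBm)]
  have hABeq : A ∩ B = Set.Icc 0 x ×ˢ Set.Icc 0 y := by
    rw [hA, hB, Set.prod_inter_prod, Set.Icc_inter_Icc, Set.Icc_inter_Icc]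
    simp [min_eq_left hx.2, min_eq_right hy.2]
  rw [hABeq]
  simp only [cdf2, measureReal_def, smul_eq_mul, mul_one]
  ring

/-- **Lemma 1.** For a probability measure `H` on `[0,1]²` and a continuous
strictly increasing bijection `a : [0,1] → [0,1]` with inverse `a⁻`,
`∫ (1/2)|a(u1) − a⁻(u2)| dH = (1/2)(∫₀¹ H(a⁻(u),1) du + ∫₀¹ H(1,a(u)) du) − ∫₀¹ H(a⁻(u),a(u)) du`. -/
theorem lemma_H_identity
    (μ : Measure (ℝ × ℝ)) [IsProbabilityMeasure μ]
    (hsupp : ∀ᵐ p ∂μ, p ∈ Set.Icc (0 : ℝ) 1 ×ˢ Set.Icc (0 : ℝ) 1)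
    (a ainv : ℝ → ℝ)
    (ha_cont : ContinuousOn a (Set.Icc 0 1))
    (ha_mono : StrictMonoOn a (Set.Icc 0 1))
    (ha0 : a 0 = 0) (ha1 : a 1 = 1)
    (ha_maps : Set.MapsTo a (Set.Icc 0 1) (Set.Icc 0 1))
    (hainv_maps : Set.MapsTo ainv (Set.Icc 0 1) (Set.Icc 0 1))
    (h_left : ∀ u ∈ Set.Icc (0 : ℝ) 1, ainv (a u) = u)
    (h_right : ∀ u ∈ Set.Icc (0 : ℝ) 1, a (ainv u) = u) :
    ∫ p, (1 / 2) * |a p.1 - ainv p.2| ∂μ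
      = (1 / 2) * ((∫ u in (0 : ℝ)..1, cdf2 μ (ainv u) 1)
          + ∫ u in (0 : ℝ)..1, cdf2 μ 1 (a u))
        - ∫ u in (0 : ℝ)..1, cdf2 μ (ainv u) (a u) := by
  classical
  have h01 : (0:ℝ) ≤ 1 := zero_le_one
  set cl : ℝ → ℝ := fun u => min 1 (max 0 u) with hcl
  have hcl_mem : ∀ u, cl u ∈ Set.Icc (0:ℝ) 1 :=
    fun u => ⟨le_min zero_le_one (le_max_left 0 u), min_le_left _ _⟩
  have hcl_id : ∀ u ∈ Set.Icc (0:ℝ) 1, cl u = u := by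
    intro u hu; simp only [hcl]; rw [max_eq_right hu.1, min_eq_right hu.2]
  have hcl_mono : Monotone cl := fun x y h => min_le_min le_rfl (max_le_max le_rfl h)
  set aa : ℝ → ℝ := fun u => a (cl u) with haa
  set bb : ℝ → ℝ := fun u => ainv (cl u) with hbb
  have ha_mono' : MonotoneOn a (Set.Icc 0 1) := ha_mono.monotoneOn
  have hainv_mono : MonotoneOn ainv (Set.Icc (0:ℝ) 1) := by
    intro x hx y hy hxy
    by_contra hlt
    push_neg at hlt
    have h2 := ha_mono (hainv_maps hy) (hainv_maps hx) hlt
    rw [h_right x hx, h_right y hy] at h2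
    exact absurd h2 (not_lt.mpr hxy)
  have haa_mono : Monotone aa := fun x y h => ha_mono' (hcl_mem x) (hcl_mem y) (hcl_mono h)
  have hbb_mono : Monotone bb := fun x y h => hainv_mono (hcl_mem x) (hcl_mem y) (hcl_mono h)
  have haa_mem : ∀ u, aa u ∈ Set.Icc (0:ℝ) 1 := fun u => ha_maps (hcl_mem u)
  have hbb_mem : ∀ u, bb u ∈ Set.Icc (0:ℝ) 1 := fun u => hainv_maps (hcl_mem u)
  have haa_eq : ∀ u ∈ Set.Icc (0:ℝ) 1, aa u = a u := by
    intro u hu; simp only [haa]; rw [hcl_id u hu]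
  have hbb_eq : ∀ u ∈ Set.Icc (0:ℝ) 1, bb u = ainv u := by
    intro u hu; simp only [hbb]; rw [hcl_id u hu]
  have E1 : ∀ x ∈ Set.Icc (0:ℝ) 1, ∀ u ∈ Set.Icc (0:ℝ) 1, (a x ≤ u ↔ x ≤ ainv u) := by
    intro x hx u hu
    have h2 := ha_mono.le_iff_le hx (hainv_maps hu)
    rw [h_right u hu] at h2
    exact h2
  have E2 : ∀ y ∈ Set.Icc (0:ℝ) 1, ∀ u ∈ Set.Icc (0:ℝ) 1, (ainv y ≤ u ↔ y ≤ a u) := by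
    intro y hy u hu
    constructor
    · intro h
      have h2 := ha_mono' (hainv_maps hy) hu h
      rwa [h_right y hy] at h2
    · intro h
      have h2 := hainv_mono hy (ha_maps hu) h
      rwa [h_left u hu] at h2
  set G : (ℝ × ℝ) → ℝ → ℝ :=
    fun p u => (1/2) * |(if p.1 ≤ bb u then (1:ℝ) else 0) - (if p.2 ≤ aa u then 1 else 0)|
    with hG
  -- pointwise in p
  have stepL : ∀ᵐ p ∂μ, (1/2 : ℝ) * |a p.1 - ainv p.2| = ∫ u in (0:ℝ)..1, G p u := by
    filter_upwards [hsupp] with p hp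
    have hs := ha_maps hp.1
    have ht := hainv_maps hp.2
    rw [← aux_ptwise (a p.1) (ainv p.2) hs ht]
    apply intervalIntegral.integral_congr
    intro u hu
    rw [Set.uIcc_of_le h01] at hu
    have h1 : (a p.1 ≤ u) = (p.1 ≤ bb u) := propext (by rw [hbb_eq u hu]; exact E1 p.1 hp.1 u hu)
    have h2 : (ainv p.2 ≤ u) = (p.2 ≤ aa u) := propext (by rw [haa_eq u hu]; exact E2 p.2 hp.2 u hu)
    simp only [hG, h1, h2]
  -- per u
  have stepU : ∀ u : ℝ, ∫ p, G p u ∂μ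
      = (1/2) * (cdf2 μ (bb u) 1 + cdf2 μ 1 (aa u)) - cdf2 μ (bb u) (aa u) := by
    intro u
    simp only [hG]
    exact aux_peru μ hsupp (bb u) (aa u) (hbb_mem u) (haa_mem u)
  -- Fubini
  set ν : Measure ℝ := volume.restrict (Set.Ioc (0:ℝ) 1) with hν
  haveI hνfin : IsFiniteMeasure ν := by
    constructor
    rw [hν, Measure.restrict_apply_univ, Real.volume_Ioc]
    simp
  have hbbM : Measurable bb := hbb_mono.measurable
  have haaM : Measurable aa := haa_mono.measurable
  have hmeasG : Measurable (fun z : (ℝ × ℝ) × ℝ => G z.1 z.2) := by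
    have m1 : Measurable (fun z : (ℝ × ℝ) × ℝ => if z.1.1 ≤ bb z.2 then (1:ℝ) else 0) :=
      Measurable.ite (measurableSet_le measurable_fst.fst (hbbM.comp measurable_snd))
        measurable_const measurable_const
    have m2 : Measurable (fun z : (ℝ × ℝ) × ℝ => if z.1.2 ≤ aa z.2 then (1:ℝ) else 0) :=
      Measurable.ite (measurableSet_le measurable_fst.snd (haaM.comp measurable_snd))
        measurable_const measurable_const
    simp only [hG]
    exact ((m1.sub m2).abs).const_mul (1/2)
  have hintG : Integrable (Function.uncurry G) (μ.prod ν) := by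
    refine ⟨hmeasG.aestronglyMeasurable, ?_⟩
    apply HasFiniteIntegral.of_bounded (C := 1)
    filter_upwards with z
    simp only [Function.uncurry, hG, Real.norm_eq_abs]
    by_cases h1 : z.1.1 ≤ bb z.2 <;> by_cases h2 : z.1.2 ≤ aa z.2 <;>
      simp [h1, h2, abs_of_nonneg] <;> norm_num [abs_of_nonneg]
  have swap : ∫ p, (∫ u, G p u ∂ν) ∂μ = ∫ u, (∫ p, G p u ∂μ) ∂ν :=
    integral_integral_swap hintG
  -- integrabilities of the cdf functions
  have hmonoA : Monotone (fun u => cdf2 μ (bb u) 1) := by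
    intro u v h
    exact ENNReal.toReal_mono (measure_ne_top μ _)
      (measure_mono (Set.prod_mono (Set.Icc_subset_Icc le_rfl (hbb_mono h)) subset_rfl))
  have hmonoB : Monotone (fun u => cdf2 μ 1 (aa u)) := by
    intro u v h
    exact ENNReal.toReal_mono (measure_ne_top μ _)
      (measure_mono (Set.prod_mono subset_rfl (Set.Icc_subset_Icc le_rfl (haa_mono h))))
  have hmonoC : Monotone (fun u => cdf2 μ (bb u) (aa u)) := by
    intro u v h
    exact ENNReal.toReal_mono (measure_ne_top μ _)
      (measure_mono (Set.prod_mono (Set.Icc_subset_Icc le_rfl (hbb_mono h))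
        (Set.Icc_subset_Icc le_rfl (haa_mono h))))
  have iiA : IntervalIntegrable (fun u => cdf2 μ (bb u) 1) volume 0 1 := hmonoA.intervalIntegrable
  have iiB : IntervalIntegrable (fun u => cdf2 μ 1 (aa u)) volume 0 1 := hmonoB.intervalIntegrable
  have iiC : IntervalIntegrable (fun u => cdf2 μ (bb u) (aa u)) volume 0 1 :=
    hmonoC.intervalIntegrable
  have LHS1 : ∫ p, (1/2 : ℝ) * |a p.1 - ainv p.2| ∂μ = ∫ p, (∫ u, G p u ∂ν) ∂μ := by
    apply integral_congr_ae
    filter_upwards [stepL] with p hp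
    rw [hp, intervalIntegral.integral_of_le h01, hν]
  have RHS1 : ∫ u, (∫ p, G p u ∂μ) ∂ν
      = ∫ u in (0:ℝ)..1,
          ((1/2) * (cdf2 μ (bb u) 1 + cdf2 μ 1 (aa u)) - cdf2 μ (bb u) (aa u)) := by
    rw [intervalIntegral.integral_of_le h01, hν]
    exact setIntegral_congr_fun measurableSet_Ioc (fun u _ => stepU u)
  have split : ∫ u in (0:ℝ)..1,
        ((1/2) * (cdf2 μ (bb u) 1 + cdf2 μ 1 (aa u)) - cdf2 μ (bb u) (aa u))
      = (1/2) * ((∫ u in (0:ℝ)..1, cdf2 μ (bb u) 1) + ∫ u in (0:ℝ)..1, cdf2 μ 1 (aa u))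
        - ∫ u in (0:ℝ)..1, cdf2 μ (bb u) (aa u) := by
    rw [intervalIntegral.integral_sub ((iiA.add iiB).const_mul _) iiC,
      intervalIntegral.integral_const_mul, intervalIntegral.integral_add iiA iiB]
  have e1 : (∫ u in (0:ℝ)..1, cdf2 μ (bb u) 1) = ∫ u in (0:ℝ)..1, cdf2 μ (ainv u) 1 :=
    intervalIntegral.integral_congr (fun u hu => by
      rw [Set.uIcc_of_le h01] at hu; rw [hbb_eq u hu])
  have e2 : (∫ u in (0:ℝ)..1, cdf2 μ 1 (aa u)) = ∫ u in (0:ℝ)..1, cdf2 μ 1 (a u) :=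
    intervalIntegral.integral_congr (fun u hu => by
      rw [Set.uIcc_of_le h01] at hu; rw [haa_eq u hu])
  have e3 : (∫ u in (0:ℝ)..1, cdf2 μ (bb u) (aa u)) = ∫ u in (0:ℝ)..1, cdf2 μ (ainv u) (a u) :=
    intervalIntegral.integral_congr (fun u hu => by
      rw [Set.uIcc_of_le h01] at hu; rw [hbb_eq u hu, haa_eq u hu])
  calc ∫ p, (1/2 : ℝ) * |a p.1 - ainv p.2| ∂μ
      = (1/2) * ((∫ u in (0:ℝ)..1, cdf2 μ (bb u) 1) + ∫ u in (0:ℝ)..1, cdf2 μ 1 (aa u))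
        - ∫ u in (0:ℝ)..1, cdf2 μ (bb u) (aa u) := by rw [LHS1, swap, RHS1, split]
    _ = _ := by rw [e1, e2, e3]
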